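/- Let A be an m × n real matrix, W an m × k real matrix, and H a k × n real matrix, all with nonnegative entries, and suppose (WHHᵀ)_{ij} > 0 for all i, j. Define the updated matrix W' entrywise by W'_{ij} = W_{ij} · (AHᵀ)_{ij} / (WHHᵀ)_{ij}. Then ‖A − W'H‖² ≤ ‖A − WH‖², i.e., the divergence D(A‖WH) is non-increasing under the multiplicative W-update. -/

import Mathlib

open Matrix

/-- The GNMF divergence `‖A - WH‖²` (squared Frobenius norm) is non-increasing
under the Lee–Seung multiplicative update of `W`. -/
theorem nmf_W_update_nonincreasing
    {m n k : ℕ}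
    (A : Matrix (Fin m) (Fin n) ℝ)
    (W : Matrix (Fin m) (Fin k) ℝ)
    (H : Matrix (Fin k) (Fin n) ℝ)
    (hA : ∀ i j, 0 ≤ A i j)
    (hW : ∀ i j, 0 ≤ W i j)
    (hH : ∀ i j, 0 ≤ H i j)
    (hpos : ∀ i j, 0 < (W * H * Hᵀ) i j)
    (W' : Matrix (Fin m) (Fin k) ℝ)
    (hW' : ∀ i j, W' i j = W i j * (A * Hᵀ) i j / (W * H * Hᵀ) i j) :
    ∑ i, ∑ j, (A i j - (W' * H) i j) ^ 2 ≤
      ∑ i, ∑ j, (A i j - (W * H) i j) ^ 2 := by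
  apply Finset.sum_le_sum
  intro i _
  -- notation for row i
  set s : Fin k → ℝ := fun a => (W * H * Hᵀ) i a with hs
  set c : Fin k → ℝ := fun a => (A * Hᵀ) i a with hc
  have hspos : ∀ a, 0 < s a := fun a => hpos i a
  set r : Fin k → ℝ := fun a => (c a - s a) / s a with hr
  set d : Fin k → ℝ := fun a => W i a * r a with hd
  have hcs : ∀ a, c a = ∑ j, A i j * H a j := by
    intro a
    simp [hc, Matrix.mul_apply, Matrix.transpose_apply]
  have hss : ∀ a, s a = ∑ j, (W * H) i j * H a j := by
    intro a
    simp [hs, Matrix.mul_apply, Matrix.transpose_apply]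
  have hW'd : ∀ a, W' i a = W i a + d a := by
    intro a
    rw [hW' i a]
    change W i a * c a / s a = W i a + d a
    have h0 : s a ≠ 0 := (hspos a).ne'
    simp only [hd, hr]
    field_simp
    ring
  have hW'H : ∀ j, (W' * H) i j = (W * H) i j + ∑ a, d a * H a j := by
    intro j
    simp only [Matrix.mul_apply]
    rw [← Finset.sum_add_distrib]
    exact Finset.sum_congr rfl fun a _ => by rw [hW'd a]; ring
  -- expansion of the square
  have hexp : ∀ j, (A i j - (W' * H) i j) ^ 2 =
      (A i j - (W * H) i j) ^ 2
        - 2 * (∑ a, d a * H a j) * (A i j - (W * H) i j)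
        + (∑ a, d a * H a j) ^ 2 := by
    intro j
    rw [hW'H j]; ring
  rw [Finset.sum_congr rfl fun j _ => hexp j]
  -- cross term X and quadratic term Y
  have hX : ∑ j, (∑ a, d a * H a j) * (A i j - (W * H) i j)
      = ∑ a, d a * (c a - s a) := by
    have : ∀ j, (∑ a, d a * H a j) * (A i j - (W * H) i j)
        = ∑ a, d a * (H a j * (A i j - (W * H) i j)) := by
      intro j
      rw [Finset.sum_mul]
      exact Finset.sum_congr rfl fun a _ => by ring
    rw [Finset.sum_congr rfl fun j _ => this j, Finset.sum_comm]
    refine Finset.sum_congr rfl fun a _ => ?_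
    rw [← Finset.mul_sum]
    congr 1
    rw [hcs a, hss a, ← Finset.sum_sub_distrib]
    exact Finset.sum_congr rfl fun j _ => by ring
  have hY : ∑ j, (∑ a, d a * H a j) ^ 2
      = ∑ a, ∑ b, (∑ j, H a j * H b j) * (d a * d b) := by
    have h1 : ∀ j, (∑ a, d a * H a j) ^ 2
        = ∑ a, ∑ b, (d a * H a j) * (d b * H b j) := by
      intro j
      rw [sq, Finset.sum_mul_sum]
    rw [Finset.sum_congr rfl fun j _ => h1 j, Finset.sum_comm]
    refine Finset.sum_congr rfl fun a _ => ?_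
    rw [Finset.sum_comm]
    refine Finset.sum_congr rfl fun b _ => ?_
    rw [Finset.sum_mul]
    exact Finset.sum_congr rfl fun j _ => by ring
  -- Q := ∑ a, W i a * r a ^ 2 * s a, which is nonnegative
  set Q : ℝ := ∑ a, W i a * r a ^ 2 * s a with hQ
  have hQnonneg : 0 ≤ Q := by
    refine Finset.sum_nonneg fun a _ => ?_
    exact mul_nonneg (mul_nonneg (hW i a) (sq_nonneg _)) (hspos a).le
  have hXQ : ∑ a, d a * (c a - s a) = Q := by
    refine Finset.sum_congr rfl fun a _ => ?_
    have h0 : s a ≠ 0 := (hspos a).ne'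
    have : c a - s a = r a * s a := by
      simp only [hr]; field_simp
    rw [this]; simp only [hd]; ring
  -- the key quadratic bound:  Y ≤ Q
  have hBw : ∀ a, ∑ b, (∑ j, H a j * H b j) * W i b = s a := by
    intro a
    rw [hss a]
    rw [Finset.sum_congr rfl fun b _ => Finset.sum_mul Finset.univ (fun j => H a j * H b j) (W i b)]
    rw [Finset.sum_comm]
    refine Finset.sum_congr rfl fun j _ => ?_
    rw [Matrix.mul_apply, Finset.sum_mul]
    exact Finset.sum_congr rfl fun b _ => by ring
  have hYQ : ∑ a, ∑ b, (∑ j, H a j * H b j) * (d a * d b) ≤ Q := by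
    have step1 : ∑ a, ∑ b, (∑ j, H a j * H b j) * (d a * d b)
        ≤ ∑ a, ∑ b, (∑ j, H a j * H b j) * (W i a * W i b)
            * ((r a ^ 2 + r b ^ 2) / 2) := by
      refine Finset.sum_le_sum fun a _ => Finset.sum_le_sum fun b _ => ?_
      have hB : 0 ≤ ∑ j, H a j * H b j :=
        Finset.sum_nonneg fun j _ => mul_nonneg (hH a j) (hH b j)
      have hww : 0 ≤ W i a * W i b := mul_nonneg (hW i a) (hW i b)
      have hrr : r a * r b ≤ (r a ^ 2 + r b ^ 2) / 2 := by nlinarith [sq_nonneg (r a - r b)]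
      simp only [hd]
      calc (∑ j, H a j * H b j) * (W i a * r a * (W i b * r b))
          = (∑ j, H a j * H b j) * (W i a * W i b) * (r a * r b) := by ring
        _ ≤ (∑ j, H a j * H b j) * (W i a * W i b) * ((r a ^ 2 + r b ^ 2) / 2) := by
            exact mul_le_mul_of_nonneg_left hrr (mul_nonneg hB hww)
    refine step1.trans_eq ?_
    have split : ∑ a, ∑ b, (∑ j, H a j * H b j) * (W i a * W i b)
            * ((r a ^ 2 + r b ^ 2) / 2)
        = (∑ a, ∑ b, (∑ j, H a j * H b j) * (W i a * W i b) * r a ^ 2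
          + ∑ a, ∑ b, (∑ j, H a j * H b j) * (W i a * W i b) * r b ^ 2) / 2 := by
      rw [eq_div_iff (by norm_num : (2:ℝ) ≠ 0), Finset.sum_mul, ← Finset.sum_add_distrib]
      refine Finset.sum_congr rfl fun a _ => ?_
      rw [Finset.sum_mul, ← Finset.sum_add_distrib]
      exact Finset.sum_congr rfl fun b _ => by ring
    have sym : ∑ a, ∑ b, (∑ j, H a j * H b j) * (W i a * W i b) * r b ^ 2
        = ∑ a, ∑ b, (∑ j, H a j * H b j) * (W i a * W i b) * r a ^ 2 := by
      rw [Finset.sum_comm]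
      refine Finset.sum_congr rfl fun a _ => Finset.sum_congr rfl fun b _ => ?_
      rw [show (∑ j, H b j * H a j) = ∑ j, H a j * H b j from
        Finset.sum_congr rfl fun j _ => mul_comm _ _]
      ring
    have diag : ∑ a, ∑ b, (∑ j, H a j * H b j) * (W i a * W i b) * r a ^ 2 = Q := by
      refine Finset.sum_congr rfl fun a _ => ?_
      have : ∑ b, (∑ j, H a j * H b j) * (W i a * W i b) * r a ^ 2
          = W i a * r a ^ 2 * ∑ b, (∑ j, H a j * H b j) * W i b := by
        rw [Finset.mul_sum]
        exact Finset.sum_congr rfl fun b _ => by ring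
      rw [this, hBw a]
    rw [split, sym, diag]
    ring
  -- put everything together
  have e1 : ∑ j, (∑ a, d a * H a j) ^ 2 ≤ Q := by rw [hY]; exact hYQ
  have e2 : ∑ j, (∑ a, d a * H a j) * (A i j - (W * H) i j) = Q := by
    rw [hX]; exact hXQ
  have heq : ∑ j, ((A i j - (W * H) i j) ^ 2
        - 2 * (∑ a, d a * H a j) * (A i j - (W * H) i j)
        + (∑ a, d a * H a j) ^ 2)
      = ∑ j, (A i j - (W * H) i j) ^ 2
        - 2 * ∑ j, (∑ a, d a * H a j) * (A i j - (W * H) i j)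
        + ∑ j, (∑ a, d a * H a j) ^ 2 := by
    rw [Finset.sum_add_distrib, Finset.sum_sub_distrib, Finset.mul_sum]
    congr 2
    exact Finset.sum_congr rfl fun j _ => by ring
  rw [heq, e2]
  linarith [e1, hQnonneg]
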